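/- Fix n ≥ 1, and let 𝓕ₙ be the class of graphs F having exactly n vertices of infinite degree, forming a set X, such that every edge of F has at least one endpoint in X. Then every F ∈ 𝓕ₙ satisfies F → (S_∞, nK₂), and every graph Γ with Γ → (S_∞, nK₂) contains a subgraph belonging to 𝓕ₙ. -/

import Mathlib

open SimpleGraph

/-- `G` embeds into `H`: an injective graph homomorphism (not necessarily induced). -/
def EmbedsIn {α β : Type*} (G : SimpleGraph α) (H : SimpleGraph β) : Prop :=
  ∃ f : G →g H, Function.Injective f

/-- `G` is self-embeddable: it admits an injective adjacency-preserving self-map whose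
image, as a subgraph, is a proper subgraph (strictly smaller edge set). -/
def SelfEmbeddable {α : Type*} (G : SimpleGraph α) : Prop :=
  ∃ f : G →g G, Function.Injective f ∧ Sym2.map f '' G.edgeSet ⊂ G.edgeSet

/-- `G` is strongly self-embeddable: `G` embeds into `G - v` for every vertex `v`. -/
def StronglySelfEmbeddable {α : Type*} (G : SimpleGraph α) : Prop :=
  ∀ v : α, EmbedsIn G (G.induce ({v}ᶜ : Set α))

/-- The subgraph of `F` consisting of the edges with color `b` under coloring `c`. -/
def colorSubgraph {α : Type*} (F : SimpleGraph α) (c : Sym2 α → Bool) (b : Bool) :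
    SimpleGraph α where
  Adj x y := F.Adj x y ∧ c s(x, y) = b
  symm := ⟨by
    intro x y h
    exact ⟨h.1.symm, by rw [Sym2.eq_swap]; exact h.2⟩⟩
  loopless := ⟨by intro x h; exact F.ne_of_adj h.1 rfl⟩

/-- `F → (G, H)` : every red-blue coloring of the edges of `F` yields a red copy of `G`
or a blue copy of `H` (here `true` = red, `false` = blue). -/
def Arrows {α β γ : Type*} (F : SimpleGraph α) (G : SimpleGraph β) (H : SimpleGraph γ) : Prop :=
  ∀ c : Sym2 α → Bool,
    EmbedsIn G (colorSubgraph F c true) ∨ EmbedsIn H (colorSubgraph F c false)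

/-- `F` is `(G,H)`-minimal: it arrows `(G,H)` but no proper subgraph of it does. -/
def RamseyMinimal {α β γ : Type*} (F : SimpleGraph α) (G : SimpleGraph β)
    (H : SimpleGraph γ) : Prop :=
  Arrows F G H ∧ ∀ F' : SimpleGraph α, F' < F → ¬ Arrows F' G H

/-- `G` has no isolated vertices. -/
def NoIsolated {α : Type*} (G : SimpleGraph α) : Prop := ∀ v, ∃ w, G.Adj v w

/-- The single-edge graph `K₂`. -/
def K2 : SimpleGraph (Fin 2) := ⊤

/-- The matching `nK₂` with `n` pairwise disjoint edges. -/
def Matching (n : ℕ) : SimpleGraph (Fin n × Fin 2) where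
  Adj a b := a.1 = b.1 ∧ a.2 ≠ b.2
  symm := ⟨by intro a b h; exact ⟨h.1.symm, h.2.symm⟩⟩
  loopless := ⟨by intro a h; exact h.2 rfl⟩

/-- The disjoint union `nG` of `n` copies of `G`. -/
def nCopies {V : Type*} (n : ℕ) (G : SimpleGraph V) : SimpleGraph (Fin n × V) where
  Adj a b := a.1 = b.1 ∧ G.Adj a.2 b.2
  symm := ⟨by intro a b h; exact ⟨h.1.symm, h.2.symm⟩⟩
  loopless := ⟨by intro a h; exact G.ne_of_adj h.2 rfl⟩

/-- The infinite star `S_∞ = K_{1,∞}`, with center `none`. -/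
def InfStar : SimpleGraph (Option ℕ) := SimpleGraph.fromRel (fun a _ => a = none)

/-- The finite star `K_{1,n}`, with center `none`. -/
def StarN (n : ℕ) : SimpleGraph (Option (Fin n)) := SimpleGraph.fromRel (fun a _ => a = none)

/-- The ray `P_∞` (one-way infinite path) on `ℕ`. -/
def Ray : SimpleGraph ℕ := SimpleGraph.fromRel (fun a b => b = a + 1)

/-- The `k`-ray `P_{k∞}`: `k` rays glued at a common endpoint `none`. -/
def kRay (k : ℕ) : SimpleGraph (Option (Fin k × ℕ)) :=
  SimpleGraph.fromRel (fun a b =>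
    (a = none ∧ ∃ i, b = some (i, 0)) ∨ (∃ i n, a = some (i, n) ∧ b = some (i, n + 1)))
/-- Membership in the family `𝓕ₙ`: exactly `n` vertices of infinite degree, and every
edge is incident to one of them. -/
def InFamilyN {W : Type*} (n : ℕ) (F : SimpleGraph W) : Prop :=
  (∃ X : Finset W, (↑X : Set W) = {v | (F.neighborSet v).Infinite} ∧ X.card = n) ∧
  ∀ a b, F.Adj a b → (F.neighborSet a).Infinite ∨ (F.neighborSet b).Infinite

section Aux

open Classical

/-- If some vertex has infinite neighborhood, the infinite star embeds. -/
lemma embed_star_aux {W : Type*} (G : SimpleGraph W) (v : W)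
    (h : (G.neighborSet v).Infinite) : EmbedsIn InfStar G := by
  let g := h.natEmbedding
  refine ⟨⟨fun a => a.elim v (fun k => (g k : W)), ?_⟩, ?_⟩
  · rintro a b hab
    rw [InfStar, SimpleGraph.fromRel_adj] at hab
    obtain ⟨hne, hor⟩ := hab
    rcases hor with h1 | h1
    · subst h1
      obtain ⟨k, rfl⟩ : ∃ k, b = some k := Option.ne_none_iff_exists'.mp (Ne.symm hne)
      exact (g k).2
    · subst h1
      obtain ⟨k, rfl⟩ : ∃ k, a = some k := Option.ne_none_iff_exists'.mp hne
      exact ((g k).2 : G.Adj v _).symm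
  · intro a b hab
    match a, b with
    | none, none => rfl
    | none, some k =>
        exact absurd (hab : v = (g k : W)) (G.ne_of_adj ((g k).2 : G.Adj v _))
    | some k, none =>
        exact absurd (hab : (g k : W) = v).symm (G.ne_of_adj ((g k).2 : G.Adj v _))
    | some k, some k' =>
        exact congrArg some (g.injective (Subtype.ext (hab : (g k : W) = g k')))

/-- Injective choice from infinite sets avoiding a finite set. -/
lemma injective_choice_aux {W : Type*} :
    ∀ (n : ℕ) (B : Fin n → Set W), (∀ i, (B i).Infinite) → ∀ (X : Set W), X.Finite →
      ∃ y : Fin n → W, Function.Injective y ∧ ∀ i, y i ∈ B i ∧ y i ∉ X := by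
  intro n
  induction n with
  | zero =>
      intro B _ X _
      exact ⟨fun i => i.elim0, fun i => i.elim0, fun i => i.elim0⟩
  | succ m ih =>
      intro B hB X hX
      obtain ⟨y', hy'inj, hy'⟩ := ih (fun i => B i.succ) (fun i => hB _) X hX
      have hfin : (X ∪ Set.range y').Finite := hX.union (Set.finite_range y')
      obtain ⟨y0, hy0⟩ := ((hB 0).diff hfin).nonempty
      refine ⟨Fin.cons y0 y', ?_, ?_⟩
      · rw [Fin.cons_injective_iff]
        exact ⟨fun hr => hy0.2 (Or.inr hr), hy'inj⟩
      · intro i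
        refine Fin.cases ?_ ?_ i
        · simpa using ⟨hy0.1, fun hx => hy0.2 (Or.inl hx)⟩
        · intro j
          simpa using hy' j

/-- Embed the matching from injective families. -/
lemma embed_matching_aux {W : Type*} (G : SimpleGraph W) (n : ℕ) (x y : Fin n → W)
    (hx : Function.Injective x) (hy : Function.Injective y)
    (hxy : ∀ i j, x i ≠ y j) (hadj : ∀ i, G.Adj (x i) (y i)) :
    EmbedsIn (Matching n) G := by
  refine ⟨⟨fun p => if p.2 = 0 then x p.1 else y p.1, ?_⟩, ?_⟩
  · rintro ⟨i, j⟩ ⟨i', j'⟩ ⟨h1, h2⟩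
    simp only at h1
    subst h1
    fin_cases j <;> fin_cases j' <;> simp_all <;>
      first
        | exact hadj i
        | exact (hadj i).symm
  · rintro ⟨i, j⟩ ⟨i', j'⟩ h
    fin_cases j <;> fin_cases j' <;> simp_all
    · exact hx h
    · exact absurd h.symm (hxy i' i)
    · exact hy h

/-- If the infinite-degree vertices fit inside a set of size `< n`, the graph does not
arrow `(S_∞, nK₂)`. -/
lemma not_arrows_aux {W : Type*} (Γ : SimpleGraph W) (n : ℕ) (Y : Finset W)
    (hY : {v | (Γ.neighborSet v).Infinite} ⊆ ↑Y) (hcard : Y.card < n) :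
    ¬ Arrows Γ InfStar (Matching n) := by
  intro h
  have key : ∀ a b : W, (decide (∀ v ∈ s(a, b), v ∉ Y) = true) ↔ (a ∉ Y ∧ b ∉ Y) := by
    intro a b
    rw [decide_eq_true_iff]
    constructor
    · intro hv
      exact ⟨hv a (by simp), hv b (by simp)⟩
    · rintro ⟨ha, hb⟩ v hv
      rcases Sym2.mem_iff.mp hv with rfl | rfl
      · exact ha
      · exact hb
  rcases h (fun e => decide (∀ v ∈ e, v ∉ Y)) with ⟨f, finj⟩ | ⟨f, finj⟩
  · -- red star: contradiction
    have hstar : ∀ k : ℕ, InfStar.Adj none (some k) := by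
      intro k
      rw [InfStar, SimpleGraph.fromRel_adj]
      exact ⟨by simp, Or.inl rfl⟩
    have hadj : ∀ k : ℕ, Γ.Adj (f none) (f (some k)) ∧
        f none ∉ Y ∧ f (some k) ∉ Y := by
      intro k
      have := f.map_adj (hstar k)
      exact ⟨this.1, (key _ _).mp this.2⟩
    have hsub : Set.range (fun k : ℕ => f (some k)) ⊆ Γ.neighborSet (f none) := by
      rintro w ⟨k, rfl⟩
      exact (hadj k).1
    have hinf : (Γ.neighborSet (f none)).Infinite :=
      (Set.infinite_range_of_injective
        (fun a b hab => Option.some_injective _ (finj hab))).mono hsub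
    have : f none ∈ ↑Y := hY hinf
    exact (hadj 0).2.1 this
  · -- blue matching: contradiction with |Y| < n
    have hedge : ∀ i : Fin n, Γ.Adj (f (i, 0)) (f (i, 1)) ∧
        (f (i, 0) ∈ Y ∨ f (i, 1) ∈ Y) := by
      intro i
      have hadj : (Matching n).Adj (i, 0) (i, 1) := ⟨rfl, by simp⟩
      have := f.map_adj hadj
      refine ⟨this.1, ?_⟩
      by_contra hcon
      push_neg at hcon
      have htrue := (key _ _).mpr ⟨hcon.1, hcon.2⟩
      have hfalse : decide (∀ v ∈ s(f (i, 0), f (i, 1)), v ∉ Y) = false := this.2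
      rw [htrue] at hfalse
      exact absurd hfalse (by simp)
    let g : Fin n → W := fun i => if f (i, 0) ∈ Y then f (i, 0) else f (i, 1)
    have hgY : ∀ i, g i ∈ Y := by
      intro i
      by_cases hc : f (i, 0) ∈ Y
      · simpa [g, hc] using hc
      · have := (hedge i).2.resolve_left hc
        simpa [g, hc] using this
    have hginj : Function.Injective g := by
      intro i i' hg
      by_cases hc : f (i, 0) ∈ Y <;> by_cases hc' : f (i', 0) ∈ Y <;>
        simp only [g, hc, hc', if_pos, if_neg, if_true, if_false] at hg <;>
        simpa using congrArg Prod.fst (finj hg)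
    have : n ≤ Y.card := by
      classical
      have h1 : Fintype.card (Fin n) ≤ Fintype.card Y :=
        Fintype.card_le_of_injective (fun i => ⟨g i, hgY i⟩)
          (fun a b hab => hginj (congrArg Subtype.val hab))
      simpa [Fintype.card_coe] using h1
    omega

end Aux

/-- Every member of `𝓕ₙ` arrows `(S_∞, nK₂)`, and every graph arrowing `(S_∞, nK₂)`
contains a subgraph belonging to `𝓕ₙ`. -/
theorem stmt17 (n : ℕ) (hn : 1 ≤ n) :
    (∀ (W : Type) [Countable W] (F : SimpleGraph W), InFamilyN n F →
      Arrows F InfStar (Matching n)) ∧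
    (∀ (W : Type) [Countable W] (Γ : SimpleGraph W), Arrows Γ InfStar (Matching n) →
      ∃ F' : SimpleGraph W, F' ≤ Γ ∧ InFamilyN n F') := by
  constructor
  · rintro W _inst F ⟨⟨X, hXset, hXcard⟩, hedge⟩ c
    by_cases hred : ∃ v, ((colorSubgraph F c true).neighborSet v).Infinite
    · obtain ⟨v, hv⟩ := hred
      exact Or.inl (embed_star_aux _ v hv)
    · push_neg at hred
      right
      have e := X.equivFinOfCardEq hXcard
      set x : Fin n → W := fun i => ((e.symm i : X) : W) with hxdef
      have hxinj : Function.Injective x := by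
        intro i j hij
        exact e.symm.injective (Subtype.ext hij)
      have hxX : ∀ i, x i ∈ X := fun i => (e.symm i).2
      have hblue : ∀ i, ((colorSubgraph F c false).neighborSet (x i)).Infinite := by
        intro i
        have hinf : (F.neighborSet (x i)).Infinite := by
          have hm : x i ∈ (↑X : Set W) := hxX i
          rw [hXset] at hm
          exact hm
        by_contra hfin
        rw [Set.not_infinite] at hfin
        have hsub : F.neighborSet (x i) ⊆
            (colorSubgraph F c true).neighborSet (x i) ∪
              (colorSubgraph F c false).neighborSet (x i) := by
          intro w hw
          cases hcb : c s(x i, w) with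
          | true => exact Or.inl ⟨hw, hcb⟩
          | false => exact Or.inr ⟨hw, hcb⟩
        have hredfin := hred (x i)
        exact hinf (Set.Finite.subset (hredfin.union hfin) hsub)
      obtain ⟨y, hyinj, hy⟩ := injective_choice_aux n _ hblue ↑X X.finite_toSet
      refine embed_matching_aux _ n x y hxinj hyinj ?_ ?_
      · intro i j hxy
        exact (hy j).2 (hxy ▸ hxX i)
      · intro i
        exact (hy i).1
  · intro W _inst Γ hArr
    classical
    have hbig : ∃ X : Finset W,
        (↑X : Set W) ⊆ {v | (Γ.neighborSet v).Infinite} ∧ X.card = n := by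
      by_cases hS : {v | (Γ.neighborSet v).Infinite}.Infinite
      · exact hS.exists_subset_card_eq n
      · rw [Set.not_infinite] at hS
        rcases le_or_gt n hS.toFinset.card with hle | hlt
        · obtain ⟨X, hsub, hcardX⟩ := Finset.exists_subset_card_eq hle
          refine ⟨X, ?_, hcardX⟩
          intro v hv
          have hv2 : v ∈ hS.toFinset := hsub hv
          simpa using hS.mem_toFinset.mp hv2
        · refine absurd hArr (not_arrows_aux Γ n hS.toFinset ?_ hlt)
          intro v hv
          simpa using hv
    obtain ⟨X, hXS, hXcard⟩ := hbig
    let F' : SimpleGraph W :=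
      { Adj := fun a b => Γ.Adj a b ∧ (a ∈ X ∨ b ∈ X)
        symm := ⟨by rintro a b ⟨h1, h2⟩; exact ⟨h1.symm, h2.symm⟩⟩
        loopless := ⟨by rintro a ⟨h1, _⟩; exact Γ.ne_of_adj h1 rfl⟩ }
    have hmemX : ∀ v ∈ X, (F'.neighborSet v).Infinite := by
      intro v hv
      have hsub : Γ.neighborSet v ⊆ F'.neighborSet v := fun w hw => ⟨hw, Or.inl hv⟩
      exact (hXS (Finset.mem_coe.mpr hv)).mono hsub
    have hnot : ∀ v, v ∉ X → ¬ (F'.neighborSet v).Infinite := by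
      intro v hv hinf
      have hsub : F'.neighborSet v ⊆ ↑X := by
        rintro w ⟨_, h2⟩
        exact h2.resolve_left hv
      exact hinf (X.finite_toSet.subset hsub)
    refine ⟨F', fun a b h => h.1, ⟨X, ?_, hXcard⟩, ?_⟩
    · ext v
      simp only [Finset.coe_sort_coe, Finset.mem_coe, Set.mem_setOf_eq]
      constructor
      · exact fun hv => hmemX v hv
      · intro hv
        by_contra hc
        exact hnot v hc hv
    · rintro a b ⟨h1, h2⟩
      rcases h2 with h2 | h2
      · exact Or.inl (hmemX a h2)
      · exact Or.inr (hmemX b h2)
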